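/- Let Φ : Pic′ → Pic be the ℤ-linear map defined on the basis by Φ(H_q) = 2H_x + H_y − F₁ − F₃ − F₄ − F₇, Φ(H_p) = H_x + H_y − F₁ − F₇, Φ(E₁) = H_x − F₁, Φ(E₂) = F₂, Φ(E₃) = H_x − F₇, Φ(E₄) = F₈, Φ(E₅) = H_x + H_y − F₁ − F₄ − F₇, Φ(E₆) = H_x + H_y − F₁ − F₃ − F₇, Φ(E₇) = F₅, Φ(E₈) = F₆, and let Ψ : Pic → Pic′ be the ℤ-linear map defined by Ψ(H_x) = H_q + H_p − E₅ − E₆, Ψ(H_y) = H_q + 2H_p − E₁ − E₃ − E₅ − E₆, Ψ(F₁) = H_q + H_p − E₁ − E₅ − E₆, Ψ(F₂) = E₂, Ψ(F₃) = H_p − E₆, Ψ(F₄) = H_p − E₅, Ψ(F₅) = E₇, Ψ(F₆) = E₈, Ψ(F₇) = H_q + H_p − E₃ − E₅ − E₆, Ψ(F₈) = E₄. Then: (i) Ψ ∘ Φ and Φ ∘ Ψ are the identity maps; (ii) Φ preserves the intersection forms; (iii) Φ maps the standard surface roots to the Laguerre surface roots: Φ(E₁−E₂) = H_x−F₁−F₂,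 Φ(E₃−E₄) = H_x−F₇−F₈, Φ(H_q−E₁−E₃) = H_y−F₃−F₄, Φ(H_p−E₅−E₇) = F₄−F₅, Φ(E₅−E₆) = F₃−F₄, Φ(E₇−E₈) = F₅−F₆; and (iv) Φ maps the standard symmetry roots to the final Laguerre symmetry roots: Φ(H_p−E₁−E₂) = H_y−F₂−F₇, Φ(H_q−E₅−E₆) = F₁+F₇−H_y, Φ(H_p−E₃−E₄) = H_y−F₁−F₈, Φ(H_q−E₇−E₈) = 2H_x+H_y−F₁−F₃−F₄−F₅−F₆−F₇. -/
import Mathlib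


/-- The Picard lattice `Pic` of the blown-up surface: the free `ℤ`-module of rank 10 with basis
`H_x, H_y, F₁, …, F₈`. -/
abbrev Pic : Type := Fin 10 → ℤ

/-- The `i`-th basis vector of `Pic`. -/
def bv (i : Fin 10) : Pic := fun j => if j = i then 1 else 0

/-- The class `H_x` of a vertical line. -/
def Hx : Pic := bv 0

/-- The class `H_y` of a horizontal line. -/
def Hy : Pic := bv 1

/-- The class `F (k)` of the exceptional divisor `F_{k+1}` (so `F 0 = F₁`, …, `F 7 = F₈`). -/
def F (k : Fin 8) : Pic := bv ⟨k.val + 2, by omega⟩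

/-- The intersection form on `Pic`: `H_x•H_x = H_y•H_y = 0`, `H_x•H_y = 1`,
`H_x•F_i = H_y•F_i = 0`, `F_i•F_j = −δ_{ij}`. -/
def inter (v w : Pic) : ℤ :=
  v 0 * w 1 + v 1 * w 0 - ∑ k : Fin 8, v ⟨k.val + 2, by omega⟩ * w ⟨k.val + 2, by omega⟩


/-- The Picard lattice `Pic′` of the standard `D₅⁽¹⁾` Sakai surface: the free `ℤ`-module of
rank 10 with basis `H_q, H_p, E₁, …, E₈` (realized on the same underlying coordinate module,
with the same intersection form `inter`). -/
abbrev Pic' : Type := Fin 10 → ℤ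

/-- The class `H_q`. -/
def Hq : Pic' := bv 0

/-- The class `H_p`. -/
def Hp : Pic' := bv 1

/-- The class `E (k)` of the exceptional divisor `E_{k+1}` (so `E 0 = E₁`, …, `E 7 = E₈`). -/
def E (k : Fin 8) : Pic' := bv ⟨k.val + 2, by omega⟩
/-- Expansion of a vector in the standard basis. -/
lemma bv_expand (v : Fin 10 → ℤ) : v = ∑ i, v i • bv i := by
  funext j
  simp [bv, Finset.sum_apply]

/-- `ΦC i` is the image of `bv i` under `Φ`, written out explicitly. -/
def ΦC : Fin 10 → Pic :=
  ![![2,1,-1,0,-1,-1,0,0,-1,0],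
    ![1,1,-1,0,0,0,0,0,-1,0],
    ![1,0,-1,0,0,0,0,0,0,0],
    ![0,0,0,1,0,0,0,0,0,0],
    ![1,0,0,0,0,0,0,0,-1,0],
    ![0,0,0,0,0,0,0,0,0,1],
    ![1,1,-1,0,0,-1,0,0,-1,0],
    ![1,1,-1,0,-1,0,0,0,-1,0],
    ![0,0,0,0,0,0,1,0,0,0],
    ![0,0,0,0,0,0,0,1,0,0]]

/-- `ΨC i` is the image of `bv i` under `Ψ`, written out explicitly. -/
def ΨC : Fin 10 → Pic' :=
  ![![1,1,0,0,0,0,-1,-1,0,0],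
    ![1,2,-1,0,-1,0,-1,-1,0,0],
    ![1,1,-1,0,0,0,-1,-1,0,0],
    ![0,0,0,1,0,0,0,0,0,0],
    ![0,1,0,0,0,0,0,-1,0,0],
    ![0,1,0,0,0,0,-1,0,0,0],
    ![0,0,0,0,0,0,0,0,1,0],
    ![0,0,0,0,0,0,0,0,0,1],
    ![1,1,0,0,-1,0,-1,-1,0,0],
    ![0,0,0,0,0,1,0,0,0,0]]

lemma inter_suml {ι : Type*} (s : Finset ι) (f : ι → Pic) (w : Pic) :
    inter (∑ i ∈ s, f i) w = ∑ i ∈ s, inter (f i) w := by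
  unfold inter
  simp only [Finset.sum_apply, Finset.sum_mul, Finset.sum_sub_distrib, Finset.sum_add_distrib]
  rw [Finset.sum_comm]

lemma inter_sumr {ι : Type*} (s : Finset ι) (v : Pic) (g : ι → Pic) :
    inter v (∑ i ∈ s, g i) = ∑ i ∈ s, inter v (g i) := by
  unfold inter
  simp only [Finset.sum_apply, Finset.mul_sum, Finset.sum_sub_distrib, Finset.sum_add_distrib]
  rw [Finset.sum_comm]

lemma inter_smull (c : ℤ) (u w : Pic) : inter (c • u) w = c * inter u w := by
  simp [inter, Finset.mul_sum, mul_sub, mul_add, mul_assoc, mul_left_comm, mul_comm]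

lemma inter_smulr (c : ℤ) (u w : Pic) : inter u (c • w) = c * inter u w := by
  simp [inter, Finset.mul_sum, mul_sub, mul_add, mul_assoc, mul_left_comm, mul_comm]

example : ∀ i, (∑ k, ΦC i k • ΨC k) = bv i := by decide
example : ∀ i j, inter (ΦC i) (ΦC j) = inter (bv i) (bv j) := by decide

/-- The final change of basis `Φ : Pic′ → Pic` of Lemma 7 of the paper and its
inverse `Ψ` are mutually inverse lattice isometries, `Φ` matches the standard surface root basis
with the Laguerre surface root basis, and `Φ` matches the standard symmetry root basis with the
final Laguerre symmetry root basis. -/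
theorem final_change_of_basis
    (Φ : Pic' →ₗ[ℤ] Pic) (Ψ : Pic →ₗ[ℤ] Pic')
    (hHq : Φ Hq = (2 : ℤ) • Hx + Hy - F 0 - F 2 - F 3 - F 6)
    (hHp : Φ Hp = Hx + Hy - F 0 - F 6)
    (hE1 : Φ (E 0) = Hx - F 0)
    (hE2 : Φ (E 1) = F 1)
    (hE3 : Φ (E 2) = Hx - F 6)
    (hE4 : Φ (E 3) = F 7)
    (hE5 : Φ (E 4) = Hx + Hy - F 0 - F 3 - F 6)
    (hE6 : Φ (E 5) = Hx + Hy - F 0 - F 2 - F 6)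
    (hE7 : Φ (E 6) = F 4)
    (hE8 : Φ (E 7) = F 5)
    (hHx : Ψ Hx = Hq + Hp - E 4 - E 5)
    (hHy : Ψ Hy = Hq + (2 : ℤ) • Hp - E 0 - E 2 - E 4 - E 5)
    (hF1 : Ψ (F 0) = Hq + Hp - E 0 - E 4 - E 5)
    (hF2 : Ψ (F 1) = E 1)
    (hF3 : Ψ (F 2) = Hp - E 5)
    (hF4 : Ψ (F 3) = Hp - E 4)
    (hF5 : Ψ (F 4) = E 6)
    (hF6 : Ψ (F 5) = E 7)
    (hF7 : Ψ (F 6) = Hq + Hp - E 2 - E 4 - E 5)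
    (hF8 : Ψ (F 7) = E 3) :
    (∀ v : Pic', Ψ (Φ v) = v) ∧ (∀ w : Pic, Φ (Ψ w) = w) ∧
    (∀ v w : Pic', inter (Φ v) (Φ w) = inter v w) ∧
    (Φ (E 0 - E 1) = Hx - F 0 - F 1 ∧
     Φ (E 2 - E 3) = Hx - F 6 - F 7 ∧
     Φ (Hq - E 0 - E 2) = Hy - F 2 - F 3 ∧
     Φ (Hp - E 4 - E 6) = F 3 - F 4 ∧
     Φ (E 4 - E 5) = F 2 - F 3 ∧
     Φ (E 6 - E 7) = F 4 - F 5) ∧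
    (Φ (Hp - E 0 - E 1) = Hy - F 1 - F 6 ∧
     Φ (Hq - E 4 - E 5) = F 0 + F 6 - Hy ∧
     Φ (Hp - E 2 - E 3) = Hy - F 0 - F 7 ∧
     Φ (Hq - E 6 - E 7) = (2 : ℤ) • Hx + Hy - F 0 - F 2 - F 3 - F 4 - F 5 - F 6) := by

  have hΦb : ∀ i, Φ (bv i) = ΦC i := by
    intro i
    fin_cases i
    · exact hHq.trans (by decide)
    · exact hHp.trans (by decide)
    · exact hE1.trans (by decide)
    · exact hE2.trans (by decide)
    · exact hE3.trans (by decide)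
    · exact hE4.trans (by decide)
    · exact hE5.trans (by decide)
    · exact hE6.trans (by decide)
    · exact hE7.trans (by decide)
    · exact hE8.trans (by decide)
  have hΨb : ∀ i, Ψ (bv i) = ΨC i := by
    intro i
    fin_cases i
    · exact hHx.trans (by decide)
    · exact hHy.trans (by decide)
    · exact hF1.trans (by decide)
    · exact hF2.trans (by decide)
    · exact hF3.trans (by decide)
    · exact hF4.trans (by decide)
    · exact hF5.trans (by decide)
    · exact hF6.trans (by decide)
    · exact hF7.trans (by decide)
    · exact hF8.trans (by decide)
  have keyΦ : ∀ v : Pic', Φ v = ∑ i, v i • ΦC i := by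
    intro v
    conv_lhs => rw [bv_expand v]
    rw [map_sum]
    simp only [map_smul, hΦb]
  have keyΨ : ∀ w : Pic, Ψ w = ∑ i, w i • ΨC i := by
    intro w
    conv_lhs => rw [bv_expand w]
    rw [map_sum]
    simp only [map_smul, hΨb]
  have hΨΦC : ∀ i, Ψ (ΦC i) = bv i := by
    intro i
    rw [keyΨ]
    revert i
    decide
  have hΦΨC : ∀ i, Φ (ΨC i) = bv i := by
    intro i
    rw [keyΦ]
    revert i
    decide
  have hmat : ∀ i j, inter (ΦC i) (ΦC j) = inter (bv i) (bv j) := by decide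
  refine ⟨?_, ?_, ?_, ⟨?_, ?_, ?_, ?_, ?_, ?_⟩, ⟨?_, ?_, ?_, ?_⟩⟩
  · intro v
    rw [keyΦ, map_sum]
    simp only [map_smul, hΨΦC]
    exact (bv_expand v).symm
  · intro w
    rw [keyΨ, map_sum]
    simp only [map_smul, hΦΨC]
    exact (bv_expand w).symm
  · intro v w
    have expandR : inter v w = ∑ j, w j * ∑ i, v i * inter (bv i) (bv j) := by
      conv_lhs => rw [bv_expand v, bv_expand w]
      simp only [inter_suml, inter_sumr, inter_smull, inter_smulr]
    rw [keyΦ v, keyΦ w]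
    simp only [inter_suml, inter_sumr, inter_smull, inter_smulr, hmat]
    exact expandR.symm
  · rw [keyΦ]; decide
  · rw [keyΦ]; decide
  · rw [keyΦ]; decide
  · rw [keyΦ]; decide
  · rw [keyΦ]; decide
  · rw [keyΦ]; decide
  · rw [keyΦ]; decide
  · rw [keyΦ]; decide
  · rw [keyΦ]; decide
  · rw [keyΦ]; decide
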